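/- arXiv:2006.08447 — 7 statements merged into one kernel-verified Lean document; each statement's English description precedes it below -/
import Mathlib

section
/- Along any solution of U' = -βUV, I' = βUV - δI, V' = pI - cV with U(t) > 0 for all t, the quantity ln U(t) - (βp/(cδ))U(t) - (βp/(cδ))I(t) - (β/c)V(t) is constant in time. -/
/-- Along any solution of the target-cell-limited model with `U > 0`, the quantity
`ln U - (βp/(cδ)) U - (βp/(cδ)) I - (β/c) V` is constant in time. -/
theorem conserved_quantity
    (β δ p c : ℝ) (hβ : 0 < β) (hδ : 0 < δ) (hp : 0 < p) (hc : 0 < c)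
    (U I V : ℝ → ℝ)
    (hUpos : ∀ t, 0 < U t)
    (hU : ∀ t, HasDerivAt U (-β * U t * V t) t)
    (hI : ∀ t, HasDerivAt I (β * U t * V t - δ * I t) t)
    (hV : ∀ t, HasDerivAt V (p * I t - c * V t) t) :
    ∀ t s : ℝ,
      Real.log (U t) - (β * p / (c * δ)) * U t - (β * p / (c * δ)) * I t - (β / c) * V t =
      Real.log (U s) - (β * p / (c * δ)) * U s - (β * p / (c * δ)) * I s - (β / c) * V s := by
  set a := β * p / (c * δ) with ha
  set b := β / c with hb
  have key : ∀ t, HasDerivAt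
      (fun t => Real.log (U t) - a * U t - a * I t - b * V t) 0 t := by
    intro t
    have h1 : HasDerivAt (fun t => Real.log (U t))
        ((-β * U t * V t) / U t) t :=
      (Real.hasDerivAt_log (hUpos t).ne').comp t (hU t) |>.congr_deriv (by ring)
    have h := ((h1.sub (((hU t).const_mul a))).sub ((hI t).const_mul a)).sub
        ((hV t).const_mul b)
    convert h using 1
    any_goals rfl
    have hUne : U t ≠ 0 := (hUpos t).ne'
    have hcne : c ≠ 0 := hc.ne'
    have hδne : δ ≠ 0 := hδ.ne'
    rw [ha, hb]
    field_simp
    ring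
  intro t s
  have := is_const_of_deriv_eq_zero (f := fun t => Real.log (U t) - a * U t - a * I t - b * V t)
    (fun x => (key x).differentiableAt) (fun x => (key x).deriv) t s
  simpa using this
end

section
/- Let (U, I, V) solve U' = -βUV, I' = βUV - δI, V' = pI - cV with β, δ, p, c > 0 and initial conditions U(0) > 0, I(0) ≥ 0, V(0) > 0, components remaining nonnegative. If U(t) converges to a limit U_∞ as t → ∞, then I(t) → 0 and V(t) → 0 as t → ∞. -/
open Filter Topology

/-- A nonneg function on `[0,∞)` with derivative `-(k*g)`, `g ≥ 0` on `[0,∞)`, converges. -/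
lemma aux_conv (k : ℝ) (hk : 0 < k) (f g : ℝ → ℝ)
    (hf : ∀ t, HasDerivAt f (-(k * g t)) t)
    (hfpos : ∀ t, 0 ≤ t → 0 ≤ f t)
    (hgpos : ∀ t, 0 ≤ t → 0 ≤ g t) :
    ∃ L, Tendsto f atTop (𝓝 L) := by
  have hanti : AntitoneOn f (Set.Ici (0:ℝ)) := by
    apply antitoneOn_of_deriv_nonpos (convex_Ici 0)
      (fun t _ => (hf t).continuousAt.continuousWithinAt)
      (fun t _ => ((hf t).differentiableAt).differentiableWithinAt)
    intro t ht
    rw [interior_Ici] at ht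
    rw [(hf t).deriv]
    have := hgpos t ht.le
    nlinarith
  set fm : ℝ → ℝ := fun t => f (max t 0) with hfm
  have hantifm : Antitone fm := by
    intro a b hab
    exact hanti (le_max_right a 0) (le_max_right b 0) (max_le_max hab le_rfl)
  have hbdd : BddBelow (Set.range fm) := by
    refine ⟨0, ?_⟩
    rintro x ⟨t, rfl⟩
    exact hfpos _ (le_max_right t 0)
  refine ⟨⨅ t, fm t, (tendsto_atTop_ciInf hantifm hbdd).congr' ?_⟩
  filter_upwards [eventually_ge_atTop (0:ℝ)] with t ht
  simp [hfm, max_eq_left ht]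

lemma aux_zero (k : ℝ) (hk : 0 < k) (f g : ℝ → ℝ)
    (hf : ∀ t, HasDerivAt f (-(k * g t)) t)
    (hfpos : ∀ t, 0 ≤ t → 0 ≤ f t)
    (hgpos : ∀ t, 0 ≤ t → 0 ≤ g t)
    (M : ℝ) (hM : Tendsto g atTop (𝓝 M)) : M = 0 := by
  have hM0 : 0 ≤ M := ge_of_tendsto hM ((eventually_ge_atTop (0:ℝ)).mono hgpos)
  by_contra hne
  have hMpos : 0 < M := lt_of_le_of_ne hM0 (Ne.symm hne)
  -- eventually g t ≥ M/2
  have hev : ∀ᶠ t in atTop, M / 2 ≤ g t ∧ (0:ℝ) ≤ t := by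
    filter_upwards [hM.eventually_const_lt (by linarith : M/2 < M),
      eventually_ge_atTop (0:ℝ)] with t h1 h2
    exact ⟨h1.le, h2⟩
  obtain ⟨T, hT⟩ := hev.exists_forall_of_atTop
  have hT0 : (0:ℝ) ≤ T := (hT T le_rfl).2
  -- φ t = f t + k*(M/2)*t is antitone on [T,∞)
  set φ : ℝ → ℝ := fun t => f t + k * (M/2) * t with hφdef
  have hφ : ∀ t, HasDerivAt φ (-(k * g t) + k * (M/2)) t := by
    intro t
    exact ((hf t).add ((hasDerivAt_id t).const_mul (k * (M/2)))).congr_deriv (by ring)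
  have hanti : AntitoneOn φ (Set.Ici T) := by
    apply antitoneOn_of_deriv_nonpos (convex_Ici T)
      (fun t _ => (hφ t).continuousAt.continuousWithinAt)
      (fun t _ => ((hφ t).differentiableAt).differentiableWithinAt)
    intro t ht
    rw [interior_Ici] at ht
    rw [(hφ t).deriv]
    have := (hT t ht.le).1
    nlinarith
  set t1 : ℝ := T + (f T + 1) / (k * (M/2)) with ht1def
  have hkM : 0 < k * (M/2) := by positivity
  have hfT : 0 ≤ f T := hfpos T hT0
  have ht1 : T ≤ t1 := by
    have : 0 ≤ (f T + 1) / (k * (M/2)) := by positivity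
    rw [ht1def]; linarith
  have h1 := hanti (Set.self_mem_Ici) (Set.mem_Ici.2 ht1) ht1
  -- φ t1 ≤ φ T gives f t1 ≤ f T - k(M/2)(t1 - T) = -1
  have hft1 : f t1 ≤ -1 := by
    have : f t1 + k * (M/2) * t1 ≤ f T + k * (M/2) * T := h1
    have he : k * (M/2) * (t1 - T) = f T + 1 := by
      rw [ht1def]
      field_simp
      ring
    nlinarith [he]
  have := hfpos t1 (le_trans hT0 ht1)
  linarith


/-- If `U(t)` converges as `t → ∞`, then `I(t) → 0` and `V(t) → 0`. -/
theorem I_and_V_tend_to_zero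
    (β δ p c : ℝ) (hβ : 0 < β) (hδ : 0 < δ) (hp : 0 < p) (hc : 0 < c)
    (U I V : ℝ → ℝ)
    (hU : ∀ t, HasDerivAt U (-β * U t * V t) t)
    (hI : ∀ t, HasDerivAt I (β * U t * V t - δ * I t) t)
    (hV : ∀ t, HasDerivAt V (p * I t - c * V t) t)
    (hU0 : 0 < U 0) (hI0 : 0 ≤ I 0) (hV0 : 0 < V 0)
    (hnonneg : ∀ t, 0 ≤ t → 0 ≤ U t ∧ 0 ≤ I t ∧ 0 ≤ V t)
    (Uinf : ℝ) (hconv : Filter.Tendsto U Filter.atTop (nhds Uinf)) :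
    Filter.Tendsto I Filter.atTop (nhds 0) ∧
      Filter.Tendsto V Filter.atTop (nhds 0) := by
  -- F = U + I
  set F : ℝ → ℝ := fun t => U t + I t with hFdef
  have hF : ∀ t, HasDerivAt F (-(δ * I t)) t := by
    intro t
    have := (hU t).add (hI t)
    exact this.congr_deriv (by ring)
  have hFpos : ∀ t, 0 ≤ t → 0 ≤ F t := fun t ht =>
    add_nonneg (hnonneg t ht).1 (hnonneg t ht).2.1
  have hIpos : ∀ t, 0 ≤ t → 0 ≤ I t := fun t ht => (hnonneg t ht).2.1
  have hVpos : ∀ t, 0 ≤ t → 0 ≤ V t := fun t ht => (hnonneg t ht).2.2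
  obtain ⟨Finf, hFlim⟩ := aux_conv δ hδ F I hF hFpos hIpos
  -- I = F - U converges
  have hIlim : Filter.Tendsto I Filter.atTop (nhds (Finf - Uinf)) := by
    have := hFlim.sub hconv
    refine this.congr fun t => by simp [hFdef]
  have hL0 : Finf - Uinf = 0 := aux_zero δ hδ F I hF hFpos hIpos _ hIlim
  rw [hL0] at hIlim
  refine ⟨hIlim, ?_⟩
  -- H = F + (δ/p) V
  set H : ℝ → ℝ := fun t => F t + (δ / p) * V t with hHdef
  have hH : ∀ t, HasDerivAt H (-((δ * c / p) * V t)) t := by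
    intro t
    have := (hF t).add ((hV t).const_mul (δ / p))
    exact this.congr_deriv (by rw [mul_sub, ← mul_assoc, div_mul_cancel₀ δ hp.ne']; ring)
  have hHpos : ∀ t, 0 ≤ t → 0 ≤ H t := fun t ht =>
    add_nonneg (hFpos t ht) (mul_nonneg (by positivity) (hVpos t ht))
  have hk : 0 < δ * c / p := by positivity
  obtain ⟨Hinf, hHlim⟩ := aux_conv _ hk H V hH hHpos hVpos
  -- V = (p/δ)(H - F) converges
  have hVlim : Filter.Tendsto V Filter.atTop (nhds ((p / δ) * (Hinf - Finf))) := by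
    have := (hHlim.sub hFlim).const_mul (p / δ)
    refine this.congr fun t => ?_
    simp only [hHdef]
    field_simp
    ring
  have hM0 : (p / δ) * (Hinf - Finf) = 0 := aux_zero _ hk H V hH hHpos hVpos _ hVlim
  rwa [hM0] at hVlim
end

section
/- Let W_p denote the principal branch of the Lambert W function. If U_∞ and U₀ > 0 satisfy ln(U_∞/U₀) = (βp/(cδ))(U_∞ - U₀) + K₀ with U_∞ ∈ [0, U_c) where U_c = cδ/(βp), then U_∞ = -U_c · W_p(-R₀ e^{-R₀} e^{K₀}), where R₀ = U₀/U_c. -/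
lemma mul_exp_strictMonoOn : StrictMonoOn (fun t : ℝ => t * Real.exp t) (Set.Ici (-1)) := by
  apply strictMonoOn_of_deriv_pos (convex_Ici _)
  · exact (continuous_id.mul Real.continuous_exp).continuousOn
  · intro t ht
    rw [interior_Ici, Set.mem_Ioi] at ht
    have h : HasDerivAt (fun t : ℝ => t * Real.exp t) (1 * Real.exp t + t * Real.exp t) t :=
      (hasDerivAt_id t).mul (Real.hasDerivAt_exp t)
    rw [h.deriv]
    nlinarith [Real.exp_pos t, ht]

/-- If `U_∞ ∈ [0, U_c)` satisfies the final-size relation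
`ln(U_∞/U₀) = (βp/(cδ))(U_∞ - U₀) + K₀`, then
`U_∞ = -U_c · W_p(-R₀ e^{-R₀} e^{K₀})` where `R₀ = U₀/U_c` and `W_p` is the principal
branch of the Lambert W function (characterized on `[-1/e, 0]` by `W e^W = x` and
`-1 ≤ W ≤ 0`). -/
theorem final_size_lambert
    (β δ p c U₀ Uinf K₀ : ℝ) (hβ : 0 < β) (hδ : 0 < δ) (hp : 0 < p) (hc : 0 < c)
    (hU0 : 0 < U₀) (hK : K₀ ≤ 0)
    (Uc : ℝ) (hUc : Uc = c * δ / (β * p))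
    (W : ℝ → ℝ)
    (hW : ∀ x : ℝ, -Real.exp (-1) ≤ x → x ≤ 0 →
      W x * Real.exp (W x) = x ∧ -1 ≤ W x ∧ W x ≤ 0)
    (hUinf : Uinf ∈ Set.Ico (0 : ℝ) Uc)
    (hrel : Real.log (Uinf / U₀) = (β * p / (c * δ)) * (Uinf - U₀) + K₀) :
    Uinf = -Uc * W (-(U₀ / Uc) * Real.exp (-(U₀ / Uc)) * Real.exp K₀) := by
  have hUcpos : 0 < Uc := by rw [hUc]; positivity
  set R : ℝ := U₀ / Uc with hR
  have hRpos : 0 < R := div_pos hU0 hUcpos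
  set x : ℝ := -R * Real.exp (-R) * Real.exp K₀ with hxdef
  -- bounds on x
  have hxle : x ≤ 0 := by
    have : 0 ≤ R * Real.exp (-R) * Real.exp K₀ := by positivity
    nlinarith
  have hxge : -Real.exp (-1) ≤ x := by
    have h1 : R * Real.exp (-R) ≤ Real.exp (-1) := by
      have h2 : R ≤ Real.exp (R - 1) := by
        have := Real.add_one_le_exp (R - 1); linarith
      have h3 : Real.exp (R - 1) * Real.exp (-R) = Real.exp (-1) := by
        rw [← Real.exp_add]; ring_nf
      calc R * Real.exp (-R) ≤ Real.exp (R - 1) * Real.exp (-R) := by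
            have := Real.exp_pos (-R); nlinarith
        _ = Real.exp (-1) := h3
    have h4 : Real.exp K₀ ≤ 1 := Real.exp_le_one_iff.mpr hK
    have h5 : R * Real.exp (-R) * Real.exp K₀ ≤ Real.exp (-1) := by
      have hpos : 0 < R * Real.exp (-R) := by positivity
      nlinarith
    simp only [hxdef]; nlinarith
  obtain ⟨hwEq, hwGe, hwLe⟩ := hW x hxge hxle
  -- the coefficient equals 1/Uc
  have hcoef : β * p / (c * δ) = 1 / Uc := by
    rw [hUc]; field_simp
  -- Uinf > 0
  have hUinfpos : 0 < Uinf := by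
    rcases lt_or_eq_of_le hUinf.1 with h | h
    · exact h
    · exfalso
      rw [← h] at hrel
      simp [Real.log_zero, hcoef] at hrel
      have : K₀ = U₀ / Uc := by
        field_simp at hrel ⊢; linarith
      rw [this] at hK
      have := div_pos hU0 hUcpos
      linarith
  -- key: y := -(Uinf/Uc) satisfies y e^y = x
  set y : ℝ := -(Uinf / Uc) with hy
  have hyIci : y ∈ Set.Ici (-1 : ℝ) := by
    have : Uinf / Uc < 1 := (div_lt_one hUcpos).mpr hUinf.2
    simp only [hy, Set.mem_Ici]; linarith
  have hlog : Real.log Uinf - Real.log U₀ = (Uinf - U₀) / Uc + K₀ := by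
    rw [← Real.log_div (ne_of_gt hUinfpos) (ne_of_gt hU0), hrel, hcoef]; ring
  have hkey : y * Real.exp y = x := by
    have hA : 0 < Uinf * Real.exp (-(Uinf / Uc)) := by positivity
    have hB : 0 < U₀ * Real.exp (-(U₀ / Uc)) * Real.exp K₀ := by positivity
    have hAB : Uinf * Real.exp (-(Uinf / Uc)) = U₀ * Real.exp (-(U₀ / Uc)) * Real.exp K₀ := by
      have hlogA : Real.log (Uinf * Real.exp (-(Uinf / Uc))) = Real.log Uinf - Uinf / Uc := by
        rw [Real.log_mul (ne_of_gt hUinfpos) (Real.exp_ne_zero _), Real.log_exp]; ring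
      have hlogB : Real.log (U₀ * Real.exp (-(U₀ / Uc)) * Real.exp K₀)
          = Real.log U₀ - U₀ / Uc + K₀ := by
        rw [Real.log_mul (by positivity) (Real.exp_ne_zero _),
          Real.log_mul (ne_of_gt hU0) (Real.exp_ne_zero _), Real.log_exp, Real.log_exp]; ring
      have heq : Real.log (Uinf * Real.exp (-(Uinf / Uc)))
          = Real.log (U₀ * Real.exp (-(U₀ / Uc)) * Real.exp K₀) := by
        rw [hlogA, hlogB]
        have : (Uinf - U₀) / Uc = Uinf / Uc - U₀ / Uc := by ring
        rw [this] at hlog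
        linarith
      calc Uinf * Real.exp (-(Uinf / Uc)) = Real.exp (Real.log (Uinf * Real.exp (-(Uinf / Uc)))) :=
            (Real.exp_log hA).symm
        _ = Real.exp (Real.log (U₀ * Real.exp (-(U₀ / Uc)) * Real.exp K₀)) := by rw [heq]
        _ = U₀ * Real.exp (-(U₀ / Uc)) * Real.exp K₀ := Real.exp_log hB
    have hUcne : Uc ≠ 0 := ne_of_gt hUcpos
    rw [hy, hxdef, hR]
    have h9 : -(Uinf / Uc) * Real.exp (-(Uinf / Uc))
        = -(1 / Uc) * (Uinf * Real.exp (-(Uinf / Uc))) := by ring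
    rw [h9, hAB]; ring
  -- injectivity gives W x = y
  have hWy : W x = y := by
    apply mul_exp_strictMonoOn.injOn (Set.mem_Ici.mpr hwGe) hyIci
    simp only []
    rw [hwEq, hkey]
  rw [hWy, hy]
  field_simp
end

section
/- Let (U,I,V) solve the target-cell model with positive parameters and nonnegative components, and suppose V is twice differentiable with V'(t*) = 0 and V''(t*) > 0 at some time t* (local minimum of V) with I(t*) > 0. Then U(t*) > cδ/(βp), i.e., R(t*) := βpU(t*)/(cδ) > 1. -/
/-- At a local minimum of `V` (`V'(t*) = 0`, `V''(t*) > 0`) with `I(t*) > 0`, the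
susceptible population exceeds the critical value: `U(t*) > cδ/(βp)`. -/
theorem local_min_of_V_implies_R_gt_one
    (β δ p c : ℝ) (hβ : 0 < β) (hδ : 0 < δ) (hp : 0 < p) (hc : 0 < c)
    (U I V : ℝ → ℝ)
    (hnonneg : ∀ t, 0 ≤ U t ∧ 0 ≤ I t ∧ 0 ≤ V t)
    (hU : ∀ t, HasDerivAt U (-β * U t * V t) t)
    (hI : ∀ t, HasDerivAt I (β * U t * V t - δ * I t) t)
    (hV : ∀ t, HasDerivAt V (p * I t - c * V t) t)
    (tstar D : ℝ)
    (hV'' : HasDerivAt (fun t => p * I t - c * V t) D tstar)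
    (hmin : p * I tstar - c * V tstar = 0) (hD : 0 < D)
    (hIpos : 0 < I tstar) :
    c * δ / (β * p) < U tstar := by
  have h2 : HasDerivAt (fun t => p * I t - c * V t)
      (p * (β * U tstar * V tstar - δ * I tstar) - c * (p * I tstar - c * V tstar)) tstar :=
    ((hI tstar).const_mul p).sub ((hV tstar).const_mul c)
  have hDeq : D = p * (β * U tstar * V tstar - δ * I tstar) := by
    have := hV''.unique h2
    rw [this, hmin]; ring
  have hVt : V tstar = p * I tstar / c := by field_simp; linarith
  have hVpos : 0 < V tstar := by rw [hVt]; positivity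
  have h3 : δ * I tstar < β * U tstar * V tstar := by nlinarith
  rw [hVt] at h3
  rw [div_lt_iff₀ (by positivity)]
  have hc' : c ≠ 0 := ne_of_gt hc
  nlinarith [mul_pos hp hIpos, mul_pos hc hδ]
end

section
/- Let (U,I,V) solve the target-cell model with positive parameters and nonnegative components, and suppose V'(t*) = 0 and V''(t*) < 0 at some time t* (local maximum of V) with I(t*) > 0. Then U(t*) < cδ/(βp), i.e., R(t*) < 1. -/
/-- At a local maximum of `V` (`V'(t*) = 0`, `V''(t*) > 0`) with `I(t*) > 0`, the
susceptible population is below the critical value: `U(t*) < cδ/(βp)`. -/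
theorem local_max_of_V_implies_R_lt_one
    (β δ p c : ℝ) (hβ : 0 < β) (hδ : 0 < δ) (hp : 0 < p) (hc : 0 < c)
    (U I V : ℝ → ℝ)
    (hnonneg : ∀ t, 0 ≤ U t ∧ 0 ≤ I t ∧ 0 ≤ V t)
    (hU : ∀ t, HasDerivAt U (-β * U t * V t) t)
    (hI : ∀ t, HasDerivAt I (β * U t * V t - δ * I t) t)
    (hV : ∀ t, HasDerivAt V (p * I t - c * V t) t)
    (tstar D : ℝ)
    (hV'' : HasDerivAt (fun t => p * I t - c * V t) D tstar)
    (hmin : p * I tstar - c * V tstar = 0) (hD : D < 0)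
    (hIpos : 0 < I tstar) :
    U tstar < c * δ / (β * p) := by
  have hder : HasDerivAt (fun t => p * I t - c * V t)
      (p * (β * U tstar * V tstar - δ * I tstar) - c * (p * I tstar - c * V tstar)) tstar :=
    ((hI tstar).const_mul p).sub ((hV tstar).const_mul c)
  have hDeq : D = p * (β * U tstar * V tstar - δ * I tstar) := by
    have := hV''.unique hder
    rw [hmin] at this; linarith
  have hVeq : c * V tstar = p * I tstar := by linarith
  rw [lt_div_iff₀ (by positivity)]
  nlinarith [mul_pos hp hIpos, hnonneg tstar]
end

section
/- Let U_∞(U₀) := -U_c · W_p(-(U₀/U_c) e^{-U₀/U_c}) with U_c > 0 fixed (the I₀ = 0, V₀ → 0 limit of the final-size relation). Then: U_∞(U₀) → 0 as U₀ → 0⁺ and as U₀ → ∞; U_∞(U₀) → U_c as U₀ → U_c; U_∞ is strictly increasing on (0, U_c); and U_∞ is strictly decreasing on (U_c, ∞). -/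
open Filter Topology

private lemma f_smono : StrictMonoOn (fun t : ℝ => t * Real.exp t) (Set.Icc (-1) 0) := by
  apply strictMonoOn_of_deriv_pos (convex_Icc _ _)
  · exact (continuous_id.mul Real.continuous_exp).continuousOn
  · intro t ht
    rw [interior_Icc] at ht
    have h : HasDerivAt (fun t : ℝ => t * Real.exp t) (1 * Real.exp t + t * Real.exp t) t :=
      (hasDerivAt_id t).mul (Real.hasDerivAt_exp t)
    rw [h.deriv]
    nlinarith [Real.exp_pos t, ht.1]

private lemma g_anti : StrictAntiOn (fun u : ℝ => u * Real.exp (-u)) (Set.Ici 1) := by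
  apply strictAntiOn_of_deriv_neg (convex_Ici _)
  · exact (continuous_id.mul (Real.continuous_exp.comp continuous_neg)).continuousOn
  · intro u hu
    rw [interior_Ici, Set.mem_Ioi] at hu
    have h1 : HasDerivAt (fun u : ℝ => Real.exp (-u)) (Real.exp (-u) * (-1)) u :=
      (Real.hasDerivAt_exp (-u)).comp u ((hasDerivAt_id u).neg)
    have h : HasDerivAt (fun u : ℝ => u * Real.exp (-u))
        (1 * Real.exp (-u) + u * (Real.exp (-u) * (-1))) u :=
      (hasDerivAt_id u).mul h1
    rw [h.deriv]
    nlinarith [mul_pos (Real.exp_pos (-u)) (sub_pos.mpr hu)]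

private lemma ue_le (u : ℝ) : u * Real.exp (-u) ≤ Real.exp (-1) := by
  have h1 : u ≤ Real.exp (u - 1) := by
    have := Real.add_one_le_exp (u - 1); linarith
  have h2 : Real.exp (u - 1) * Real.exp (-u) = Real.exp (-1) := by
    rw [← Real.exp_add]; ring_nf
  calc u * Real.exp (-u) ≤ Real.exp (u - 1) * Real.exp (-u) :=
        mul_le_mul_of_nonneg_right h1 (Real.exp_pos _).le
    _ = Real.exp (-1) := h2

/-- key polynomial inequality: for `0 ≤ s ≤ 1`, `s²/2 ≤ (s-1) e^s + 1`. -/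
private lemma key_ineq (s : ℝ) (hs : 0 ≤ s) (hs1 : s ≤ 1) :
    s ^ 2 / 2 ≤ (s - 1) * Real.exp s + 1 := by
  have hb := Real.exp_bound (x := s) (by rw [abs_of_nonneg hs]; exact hs1) (n := 3) (by norm_num)
  rw [abs_of_nonneg hs] at hb
  have hsum : ∑ m ∈ Finset.range 3, s ^ m / (m.factorial : ℝ) = 1 + s + s ^ 2 / 2 := by
    norm_num [Finset.sum_range_succ]
  rw [hsum] at hb
  norm_num [Nat.factorial] at hb
  rw [abs_le] at hb
  nlinarith [hb.1, hb.2, pow_nonneg hs 3, pow_nonneg hs 4]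

/-- Properties of `U_∞(U₀) = -U_c · W_p(-(U₀/U_c) e^{-U₀/U_c})`, where `W_p` is the
principal branch of the Lambert W function (characterized on `[-1/e, 0]` by
`W e^W = x` and `-1 ≤ W ≤ 0`): `U_∞ → 0` as `U₀ → 0⁺` and as `U₀ → ∞`,
`U_∞ → U_c` as `U₀ → U_c`, `U_∞` is strictly increasing on `(0, U_c)` and strictly
decreasing on `(U_c, ∞)`. -/
theorem Uinf_properties
    (Uc : ℝ) (hUc : 0 < Uc)
    (W : ℝ → ℝ)
    (hW : ∀ x : ℝ, -Real.exp (-1) ≤ x → x ≤ 0 →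
      W x * Real.exp (W x) = x ∧ -1 ≤ W x ∧ W x ≤ 0)
    (Uinf : ℝ → ℝ)
    (hUinf : ∀ U₀ : ℝ, Uinf U₀ = -Uc * W (-(U₀ / Uc) * Real.exp (-(U₀ / Uc)))) :
    Tendsto Uinf (nhdsWithin 0 (Set.Ioi 0)) (nhds 0) ∧
    Tendsto Uinf atTop (nhds 0) ∧
    Tendsto Uinf (nhds Uc) (nhds Uc) ∧
    StrictMonoOn Uinf (Set.Ioo 0 Uc) ∧
    StrictAntiOn Uinf (Set.Ioi Uc) := by
  have hxmem : ∀ u : ℝ, 0 ≤ u →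
      -Real.exp (-1) ≤ -u * Real.exp (-u) ∧ -u * Real.exp (-u) ≤ 0 := by
    intro u hu
    constructor
    · have := ue_le u; linarith
    · have := Real.exp_pos (-u); nlinarith
  have hWf : ∀ t : ℝ, -1 ≤ t → t ≤ 0 → W (t * Real.exp t) = t := by
    intro t ht1 ht0
    have hx1 : -Real.exp (-1) ≤ t * Real.exp t := by
      have := (hxmem (-t) (by linarith)).1
      simpa using this
    have hx2 : t * Real.exp t ≤ 0 := by
      have := Real.exp_pos t; nlinarith
    obtain ⟨hWe, hW1, hW0⟩ := hW _ hx1 hx2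
    exact f_smono.injOn ⟨hW1, hW0⟩ ⟨ht1, ht0⟩ hWe
  have hid : ∀ U₀ : ℝ, 0 ≤ U₀ → U₀ ≤ Uc → Uinf U₀ = U₀ := by
    intro U₀ h0 h1
    have hu0 : 0 ≤ U₀ / Uc := div_nonneg h0 hUc.le
    have hu1 : U₀ / Uc ≤ 1 := (div_le_one hUc).mpr h1
    rw [hUinf U₀, hWf (-(U₀ / Uc)) (by linarith) (by linarith)]
    field_simp
  have hWlow : ∀ u : ℝ, 0 ≤ u →
      -1 ≤ W (-u * Real.exp (-u)) ∧ W (-u * Real.exp (-u)) ≤ 0 ∧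
      W (-u * Real.exp (-u)) * Real.exp (W (-u * Real.exp (-u))) = -u * Real.exp (-u) := by
    intro u hu
    obtain ⟨h1, h2⟩ := hxmem u hu
    obtain ⟨a, b, c⟩ := hW _ h1 h2
    exact ⟨b, c, a⟩
  refine ⟨?_, ?_, ?_, ?_, ?_⟩
  · -- limit at 0⁺
    have hev : ∀ᶠ U₀ in 𝓝[>] (0:ℝ), Uinf U₀ = U₀ := by
      filter_upwards [Ioo_mem_nhdsGT_of_mem (Set.mem_Ico.mpr ⟨le_refl (0:ℝ), hUc⟩)] with U₀ hU₀
      exact hid U₀ hU₀.1.le hU₀.2.le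
    exact Tendsto.congr' (by filter_upwards [hev] with x h using h.symm)
      (tendsto_id.mono_left nhdsWithin_le_nhds)
  · -- limit at ∞
    have hbound : ∀ U₀ : ℝ, 0 ≤ U₀ →
        0 ≤ Uinf U₀ ∧ Uinf U₀ ≤ Uc * Real.exp 1 * (U₀ / Uc * Real.exp (-(U₀ / Uc))) := by
      intro U₀ h0
      have hu0 : 0 ≤ U₀ / Uc := div_nonneg h0 hUc.le
      obtain ⟨h1, h2, h3⟩ := hWlow (U₀ / Uc) hu0
      set u := U₀ / Uc with hu
      set w := W (-u * Real.exp (-u)) with hw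
      have heq : Uinf U₀ = -Uc * w := by rw [hw, hUinf U₀]
      constructor
      · rw [heq]; nlinarith
      · rw [heq]
        have hle : Real.exp (-1) ≤ Real.exp w := Real.exp_le_exp.mpr h1
        have h4 : (-w) * Real.exp (-1) ≤ (-w) * Real.exp w :=
          mul_le_mul_of_nonneg_left hle (by linarith)
        have h5 : (-w) * Real.exp w = u * Real.exp (-u) := by linarith [h3]
        have h6 : Real.exp (-1) * Real.exp 1 = 1 := by
          rw [← Real.exp_add]; norm_num
        have h7 : -w ≤ Real.exp 1 * (u * Real.exp (-u)) := by
          have hA := mul_le_mul_of_nonneg_right (h4.trans_eq h5) (Real.exp_pos 1).le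
          calc -w = -w * Real.exp (-1) * Real.exp 1 := by rw [mul_assoc, h6, mul_one]
            _ ≤ u * Real.exp (-u) * Real.exp 1 := hA
            _ = Real.exp 1 * (u * Real.exp (-u)) := by ring
        nlinarith [mul_le_mul_of_nonneg_left h7 hUc.le]
    have htop : Tendsto (fun U₀ : ℝ => Uc * Real.exp 1 * (U₀ / Uc * Real.exp (-(U₀ / Uc))))
        atTop (𝓝 0) := by
      have h1 : Tendsto (fun U₀ : ℝ => U₀ / Uc) atTop atTop :=
        tendsto_id.atTop_div_const hUc
      have h2 : Tendsto (fun s : ℝ => s * Real.exp (-s)) atTop (𝓝 0) := by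
        simpa using Real.tendsto_pow_mul_exp_neg_atTop_nhds_zero 1
      have := (h2.comp h1).const_mul (Uc * Real.exp 1)
      simpa using this
    apply tendsto_of_tendsto_of_tendsto_of_le_of_le' tendsto_const_nhds htop
    · filter_upwards [eventually_ge_atTop (0:ℝ)] with U₀ h using (hbound U₀ h).1
    · filter_upwards [eventually_ge_atTop (0:ℝ)] with U₀ h using (hbound U₀ h).2
  · -- limit at Uc
    nth_rewrite 1 [show (𝓝 Uc) = 𝓝[≤] Uc ⊔ 𝓝[>] Uc from (nhdsLE_sup_nhdsGT Uc).symm]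
    rw [tendsto_sup]
    constructor
    · have hev : ∀ᶠ U₀ in 𝓝[≤] Uc, Uinf U₀ = U₀ := by
        filter_upwards [Ioc_mem_nhdsLE_of_mem (Set.mem_Ioc.mpr ⟨hUc, le_refl Uc⟩)] with U₀ hU₀
        exact hid U₀ hU₀.1.le hU₀.2
      exact Tendsto.congr' (by filter_upwards [hev] with x h using h.symm)
        (tendsto_id.mono_left nhdsWithin_le_nhds)
    · have hbd : ∀ U₀ : ℝ, Uc < U₀ →
          Uc - Uc * Real.sqrt (2 * Real.exp 1 *
              (Real.exp (-1) - U₀ / Uc * Real.exp (-(U₀ / Uc)))) ≤ Uinf U₀ ∧ Uinf U₀ ≤ Uc := by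
        intro U₀ hU₀
        have hu1 : 1 < U₀ / Uc := (one_lt_div hUc).mpr hU₀
        obtain ⟨h1, h2, h3⟩ := hWlow (U₀ / Uc) (by linarith)
        set u := U₀ / Uc with hu
        set w := W (-u * Real.exp (-u)) with hw
        have heq : Uinf U₀ = -Uc * w := by rw [hw, hUinf U₀]
        have hsqarg : 0 ≤ Real.exp (-1) - u * Real.exp (-u) := by
          have := ue_le u; linarith
        constructor
        · have hs0 : 0 ≤ w + 1 := by linarith
          have hs1 : w + 1 ≤ 1 := by linarith
          have hk := key_ineq (w + 1) hs0 hs1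
          have he : Real.exp (w + 1) = Real.exp w * Real.exp 1 := by rw [← Real.exp_add]
          have h6 : Real.exp (-1) * Real.exp 1 = 1 := by rw [← Real.exp_add]; norm_num
          have h3e : w * Real.exp w * Real.exp 1 = -u * Real.exp (-u) * Real.exp 1 := by
            rw [h3]
          have hk2 : (w + 1) ^ 2 ≤ 2 * Real.exp 1 * (Real.exp (-1) - u * Real.exp (-u)) := by
            rw [he] at hk
            nlinarith [hk, h3e, h6]
          have hsq : w + 1 ≤
              Real.sqrt (2 * Real.exp 1 * (Real.exp (-1) - u * Real.exp (-u))) := by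
            rw [Real.le_sqrt hs0 (by positivity)]
            exact hk2
          rw [heq]
          nlinarith [mul_le_mul_of_nonneg_left hsq hUc.le]
        · rw [heq]; nlinarith
      have hlower : Tendsto (fun U₀ : ℝ =>
          Uc - Uc * Real.sqrt (2 * Real.exp 1 *
            (Real.exp (-1) - U₀ / Uc * Real.exp (-(U₀ / Uc))))) (𝓝[>] Uc) (𝓝 Uc) := by
        have hc : Continuous (fun U₀ : ℝ =>
            Uc - Uc * Real.sqrt (2 * Real.exp 1 *
              (Real.exp (-1) - U₀ / Uc * Real.exp (-(U₀ / Uc))))) := by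
          apply continuous_const.sub
          apply continuous_const.mul
          apply Continuous.sqrt
          apply continuous_const.mul
          apply continuous_const.sub
          exact (continuous_id.div_const Uc).mul
            (Real.continuous_exp.comp (continuous_id.div_const Uc).neg)
        have hval : Uc - Uc * Real.sqrt (2 * Real.exp 1 *
            (Real.exp (-1) - Uc / Uc * Real.exp (-(Uc / Uc)))) = Uc := by
          rw [div_self hUc.ne']
          simp
        have h := (hc.tendsto Uc).mono_left (nhdsWithin_le_nhds (s := Set.Ioi Uc))
        rw [hval] at h
        exact h
      apply tendsto_of_tendsto_of_tendsto_of_le_of_le' hlower tendsto_const_nhds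
      · filter_upwards [self_mem_nhdsWithin] with U₀ hU₀ using (hbd U₀ hU₀).1
      · filter_upwards [self_mem_nhdsWithin] with U₀ hU₀ using (hbd U₀ hU₀).2
  · -- strictly increasing on (0, Uc)
    intro a ha b hb hab
    rw [hid a ha.1.le ha.2.le, hid b hb.1.le hb.2.le]
    exact hab
  · -- strictly decreasing on (Uc, ∞)
    intro a ha b hb hab
    rw [Set.mem_Ioi] at ha hb
    have hua : 1 < a / Uc := (one_lt_div hUc).mpr ha
    have hub : 1 < b / Uc := (one_lt_div hUc).mpr hb
    have habu : a / Uc < b / Uc := by gcongr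
    have hga := g_anti (Set.mem_Ici.mpr hua.le) (Set.mem_Ici.mpr hub.le) habu
    simp only at hga
    obtain ⟨ha1, ha2, ha3⟩ := hWlow (a / Uc) (by linarith)
    obtain ⟨hb1, hb2, hb3⟩ := hWlow (b / Uc) (by linarith)
    have hxlt : -(a / Uc) * Real.exp (-(a / Uc)) < -(b / Uc) * Real.exp (-(b / Uc)) := by
      nlinarith [hga]
    have hWW : W (-(a / Uc) * Real.exp (-(a / Uc))) < W (-(b / Uc) * Real.exp (-(b / Uc))) := by
      by_contra hcon
      push_neg at hcon
      rcases eq_or_lt_of_le hcon with h | h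
      · rw [h] at hb3
        nlinarith [ha3, hb3, hxlt]
      · have := f_smono ⟨hb1, hb2⟩ ⟨ha1, ha2⟩ h
        simp only at this
        rw [ha3, hb3] at this
        linarith
    rw [hUinf a, hUinf b]
    nlinarith [hWW]
end

section
/- Let (U,I,V) solve the target-cell model with positive parameters, U(t₀) > 0, I(t₀) ≥ 0, V(t₀) > 0, and suppose pI(t₀)/(cV(t₀)) > 1. Then V'(t₀) > 0; moreover, if V(t) → 0 as t → ∞, V attains a positive local maximum at some time t̂ > t₀, and at that maximum U(t̂) < cδ/(βp). -/
open Filter Topology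

/-- If `R_V(t₀) = pI(t₀)/(cV(t₀)) > 1` then `V'(t₀) > 0`; and if moreover `V(t) → 0` as
`t → ∞`, then `V` attains a positive local maximum at some `t̂ > t₀`, at which
`U(t̂) < cδ/(βp)`. -/
theorem virus_spreads_when_RV_gt_one
    (β δ p c : ℝ) (hβ : 0 < β) (hδ : 0 < δ) (hp : 0 < p) (hc : 0 < c)
    (U I V : ℝ → ℝ)
    (hU : ∀ t, HasDerivAt U (-β * U t * V t) t)
    (hI : ∀ t, HasDerivAt I (β * U t * V t - δ * I t) t)
    (hV : ∀ t, HasDerivAt V (p * I t - c * V t) t)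
    (t₀ : ℝ) (hU0 : 0 < U t₀) (hI0 : 0 ≤ I t₀) (hV0 : 0 < V t₀)
    (hRV : 1 < p * I t₀ / (c * V t₀)) :
    0 < p * I t₀ - c * V t₀ ∧
    (Tendsto V atTop (nhds 0) →
      ∃ that : ℝ, t₀ < that ∧ IsLocalMax V that ∧ 0 < V that ∧
        U that < c * δ / (β * p)) := by
  have hcV0 : 0 < c * V t₀ := mul_pos hc hV0
  have h1 : 0 < p * I t₀ - c * V t₀ := by
    have := (one_lt_div hcV0).mp hRV
    linarith
  refine ⟨h1, fun hT => ?_⟩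
  have hVc : Continuous V := continuous_iff_continuousAt.mpr fun t => (hV t).continuousAt
  have hUc : Continuous U := continuous_iff_continuousAt.mpr fun t => (hU t).continuousAt
  -- Step A: find t₁ > t₀ with V t₁ > V t₀, using V'(t₀) > 0
  obtain ⟨t₁, hslope, ht₁⟩ : ∃ t₁, 0 < slope V t₀ t₁ ∧ t₀ < t₁ := by
    have hs := hasDerivAt_iff_tendsto_slope.mp (hV t₀)
    have hpos : ∀ᶠ t in 𝓝[≠] t₀, 0 < slope V t₀ t := hs.eventually (lt_mem_nhds h1)
    have hmono : 𝓝[Set.Ioi t₀] t₀ ≤ 𝓝[{t₀}ᶜ] t₀ :=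
      nhdsWithin_mono t₀ (fun x hx => ne_of_gt hx)
    exact ((hpos.filter_mono hmono).and self_mem_nhdsWithin).exists
  have hVt₁ : V t₀ < V t₁ := by
    rw [slope_def_field, div_pos_iff] at hslope
    rcases hslope with ⟨h, _⟩ | ⟨_, h⟩ <;> linarith
  have hVt₁pos : 0 < V t₁ := hV0.trans hVt₁
  -- Step B: choose T beyond which V < V t₁
  obtain ⟨T₀, hT₀⟩ : ∃ T₀, ∀ t ≥ T₀, V t < V t₁ :=
    (hT.eventually (gt_mem_nhds hVt₁pos)).exists_forall_of_atTop
  set T : ℝ := max T₀ (t₁ + 1) with hTdef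
  have hTt₁ : t₁ < T := lt_of_lt_of_le (by linarith) (le_max_right _ _)
  have hTt₀ : t₀ < T := ht₁.trans hTt₁
  have hVT : V T < V t₁ := hT₀ T (le_max_left _ _)
  -- Step C: maximum of V on [t₀, T]
  obtain ⟨that, hmem, hmax⟩ :=
    isCompact_Icc.exists_isMaxOn (Set.nonempty_Icc.mpr hTt₀.le) (hVc.continuousOn (s := Set.Icc t₀ T))
  have ht₁mem : t₁ ∈ Set.Icc t₀ T := ⟨ht₁.le, hTt₁.le⟩
  have hge : V t₁ ≤ V that := hmax ht₁mem
  have hthat_ne_t₀ : t₀ < that := by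
    rcases eq_or_lt_of_le hmem.1 with h | h
    · exfalso; rw [← h] at hge; linarith
    · exact h
  have hthat_ne_T : that < T := by
    rcases eq_or_lt_of_le hmem.2 with h | h
    · exfalso; rw [h] at hge; linarith
    · exact h
  have hlocmax : IsLocalMax V that :=
    hmax.isLocalMax (Icc_mem_nhds hthat_ne_t₀ hthat_ne_T)
  have hVthat : 0 < V that := hVt₁pos.trans_le hge
  refine ⟨that, hthat_ne_t₀, hlocmax, hVthat, ?_⟩
  -- Step E: U that < cδ/(βp), by contradiction
  by_contra hcon
  push_neg at hcon
  have hβp : 0 < β * p := mul_pos hβ hp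
  have hUthat : 0 < U that := lt_of_lt_of_le (div_pos (mul_pos hc hδ) hβp) hcon
  have hkey : δ * c ≤ p * β * U that := by
    rw [div_le_iff₀ hβp] at hcon
    nlinarith
  -- V'(that) = 0
  have hderiv0 : p * I that - c * V that = 0 := hlocmax.hasDerivAt_eq_zero (hV that)
  -- a neighborhood where V > 0, U > 0 and V ≤ V that
  have hE : ∀ᶠ t in 𝓝 that, 0 < V t ∧ 0 < U t ∧ V t ≤ V that := by
    filter_upwards [(hVc.continuousAt (x := that)).eventually (lt_mem_nhds hVthat),
      (hUc.continuousAt (x := that)).eventually (lt_mem_nhds hUthat), hlocmax] with t h1 h2 h3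
    exact ⟨h1, h2, h3⟩
  obtain ⟨ε, hε, hball⟩ := Metric.eventually_nhds_iff_ball.mp hE
  set a : ℝ := that - ε / 2 with ha
  have haball : ∀ t ∈ Set.Icc a that, t ∈ Metric.ball that ε := by
    intro t ht
    rw [Metric.mem_ball, Real.dist_eq, abs_sub_lt_iff]
    constructor <;> [skip; skip] <;> cases' ht with h1 h2 <;> simp only [ha] at * <;> linarith
  have haV : ∀ t ∈ Set.Icc a that, 0 < V t := fun t ht => (hball t (haball t ht)).1
  have haU : ∀ t ∈ Set.Icc a that, 0 < U t := fun t ht => (hball t (haball t ht)).2.1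
  -- U is strictly decreasing on [a, that]
  have hUanti : StrictAntiOn U (Set.Icc a that) := by
    apply strictAntiOn_of_deriv_neg (convex_Icc a that) hUc.continuousOn
    intro t ht
    rw [interior_Icc] at ht
    have ht' : t ∈ Set.Icc a that := ⟨ht.1.le, ht.2.le⟩
    rw [(hU t).deriv]
    nlinarith [mul_pos (mul_pos hβ (haU t ht')) (haV t ht')]
  -- the auxiliary function g t = exp((δ+c)t) * (p I t - c V t)
  set g : ℝ → ℝ := fun t => Real.exp ((δ + c) * t) * (p * I t - c * V t) with hg
  have hgd : ∀ t, HasDerivAt g (Real.exp ((δ + c) * t) * (V t * (p * β * U t - δ * c))) t := by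
    intro t
    have h1 : HasDerivAt (fun t => Real.exp ((δ + c) * t))
        (Real.exp ((δ + c) * t) * (δ + c)) t := by
      simpa using ((hasDerivAt_id t).const_mul (δ + c)).exp
    have h2 : HasDerivAt (fun t => p * I t - c * V t)
        (p * (β * U t * V t - δ * I t) - c * (p * I t - c * V t)) t :=
      ((hI t).const_mul p).sub ((hV t).const_mul c)
    have := h1.mul h2
    exact this.congr_deriv (by ring)
  have hgc : Continuous g := continuous_iff_continuousAt.mpr fun t => (hgd t).continuousAt
  -- g is strictly increasing on [a, that]
  have hgmono : StrictMonoOn g (Set.Icc a that) := by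
    apply strictMonoOn_of_deriv_pos (convex_Icc a that) hgc.continuousOn
    intro t ht
    rw [interior_Icc] at ht
    have ht' : t ∈ Set.Icc a that := ⟨ht.1.le, ht.2.le⟩
    rw [(hgd t).deriv]
    have hVt := haV t ht'
    have hUgt : U that < U t := hUanti ht' (Set.right_mem_Icc.mpr (by simp [ha]; linarith)) ht.2
    have hW : 0 < p * β * U t - δ * c := by nlinarith
    positivity
  have halt : a < that := by simp [ha]; linarith
  -- hence V' < 0 on (a, that), so V is strictly decreasing there
  have hVanti : StrictAntiOn V (Set.Icc a that) := by
    apply strictAntiOn_of_deriv_neg (convex_Icc a that) hVc.continuousOn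
    intro t ht
    rw [interior_Icc] at ht
    have ht' : t ∈ Set.Icc a that := ⟨ht.1.le, ht.2.le⟩
    have hglt : g t < g that := hgmono ht' (Set.right_mem_Icc.mpr halt.le) ht.2
    have hgthat : g that = 0 := by simp [hg, hderiv0]
    rw [hgthat] at hglt
    rw [(hV t).deriv]
    have hexp : 0 < Real.exp ((δ + c) * t) := Real.exp_pos _
    by_contra hcon2
    push_neg at hcon2
    simp only [hg] at hglt
    nlinarith
  have : V that < V a := hVanti (Set.left_mem_Icc.mpr halt.le) (Set.right_mem_Icc.mpr halt.le) halt
  have : V a ≤ V that := (hball a (haball a (Set.left_mem_Icc.mpr halt.le))).2.2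
  linarith
end
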